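/- For the standard SL_q(2) R-matrix (entries R^1_1^1_1=R^2_2^2_2=1, R^1_2^1_2=R^2_1^2_1=q^{-1}, R^1_2^2_1=1−q^{-2}), in the braided matrix algebra B(R) generated by a,b,c,d = entries of u with relations R_{21} u_1 R_{12} u_2 = u_2 R_{21} u_1 R_{12}, the element q^{-2} a + d is central: it commutes with a, b, c, and d. -/

import Mathlib

private lemma mul_alg {K A : Type*} [CommSemiring K] [Semiring A] [Algebra K A]
    (r : K) (x : A) : x * algebraMap K A r = r • x := by
  rw [← Algebra.commutes, ← Algebra.smul_def]

/-- For the standard `SL_q(2)` R-matrix, in the braided matrix algebra `B(R)`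
(relations `R₂₁u₁R₁₂u₂ = u₂R₂₁u₁R₁₂` with `u = [[a,b],[c,d]]`), the quantum
trace `q⁻²a + d` is central: it commutes with `a`, `b`, `c` and `d`. -/
theorem slq2_braided_trace_central {K : Type*} [Field K]
    (q : K) (hq : q ≠ 0) (hq2 : q ^ 2 ≠ 1)
    {A : Type*} [Ring A] [Algebra K A] (a b c d : A) :
    let R : Matrix (Fin 2 × Fin 2) (Fin 2 × Fin 2) K := fun s r =>
      if s = (0,0) ∧ r = (0,0) then 1
      else if s = (1,1) ∧ r = (1,1) then 1
      else if s = (0,1) ∧ r = (0,1) then q⁻¹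
      else if s = (1,0) ∧ r = (1,0) then q⁻¹
      else if s = (0,1) ∧ r = (1,0) then 1 - q⁻¹ ^ 2
      else 0
    let RA : Matrix (Fin 2 × Fin 2) (Fin 2 × Fin 2) A := R.map (algebraMap K A)
    let R21 : Matrix (Fin 2 × Fin 2) (Fin 2 × Fin 2) A :=
      fun p r => RA (p.2, p.1) (r.2, r.1)
    let u : Matrix (Fin 2) (Fin 2) A := !![a, b; c, d]
    let U1 : Matrix (Fin 2 × Fin 2) (Fin 2 × Fin 2) A :=
      fun p r => if p.2 = r.2 then u p.1 r.1 else 0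
    let U2 : Matrix (Fin 2 × Fin 2) (Fin 2 × Fin 2) A :=
      fun p r => if p.1 = r.1 then u p.2 r.2 else 0
    R21 * U1 * RA * U2 = U2 * R21 * U1 * RA →
      let T := q⁻¹ ^ 2 • a + d
      T * a = a * T ∧ T * b = b * T ∧ T * c = c * T ∧ T * d = d * T := by
  intro R RA R21 u U1 U2 h T
  have e1 := congrFun (congrFun h ((0:Fin 2),(0:Fin 2))) ((0:Fin 2),(1:Fin 2))
  have e2 := congrFun (congrFun h ((0:Fin 2),(1:Fin 2))) ((0:Fin 2),(0:Fin 2))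
  have e3 := congrFun (congrFun h ((0:Fin 2),(1:Fin 2))) ((0:Fin 2),(1:Fin 2))
  have e5 := congrFun (congrFun h ((0:Fin 2),(1:Fin 2))) ((1:Fin 2),(1:Fin 2))
  have e6 := congrFun (congrFun h ((1:Fin 2),(1:Fin 2))) ((0:Fin 2),(1:Fin 2))
  simp only [Matrix.mul_apply, Fintype.sum_prod_type, Fin.sum_univ_two] at e1 e2 e3 e5 e6
  simp only [Matrix.mul_apply, Fintype.sum_prod_type, Fin.sum_univ_two, R21, RA, R, U1, U2, u,
    Matrix.map_apply, Matrix.map, Matrix.of_apply, Matrix.cons_val', Matrix.cons_val_zero, Matrix.cons_val_one,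
    Matrix.head_cons, Matrix.head_fin_const, Matrix.empty_val', Matrix.cons_val_fin_one]
    at e1 e2 e3 e5 e6
  norm_num [Prod.ext_iff, Prod.fst_zero, Prod.snd_zero, map_sub, map_one,
    ← Algebra.smul_def, mul_alg, mul_sub, sub_mul, mul_one, mul_smul_comm, smul_mul_assoc, smul_smul, smul_sub, smul_add, sub_smul, one_smul] at e1 e2 e3 e5 e6
  have key : ∀ (r : K) (x y : A), r ≠ 0 → r • x = r • y → x = y := by
    intro r x y hr hxy
    have := congrArg (fun z => r⁻¹ • z) hxy
    simpa [inv_smul_smul₀ hr] using this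
  have hq' : q⁻¹ ≠ 0 := inv_ne_zero hq
  have hda : d * a = a * d := (key _ _ _ (mul_ne_zero hq' hq') e3).symm
  have h5' : d * b = b * d + (1 - (q ^ 2)⁻¹) • (a * b) := by
    refine (key q⁻¹ _ _ hq' ?_).symm
    rw [← e5]; module
  have h6' : d * c = c * d - (1 - (q ^ 2)⁻¹) • (c * a) := by
    refine (key q⁻¹ _ _ hq' ?_).symm
    rw [smul_sub, e6]; module
  refine ⟨?_, ?_, ?_, ?_⟩ <;>
    simp only [T, add_mul, mul_add, smul_mul_assoc, mul_smul_comm]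
  · rw [hda]
  · rw [h5', e1]; module
  · rw [h6', ← e2]; module
  · rw [hda]
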